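/- For every topological space X, the map φ : K(A(X)) → O(O(X)) defined by φ(𝒦) = {U open | every A ∈ 𝒦 meets U} and the map ψ : O(O(X)) → K(A(X)) defined by ψ(ℋ) = ⋂_{U ∈ ℋ} ◇U are mutually inverse order isomorphisms between K(A(X)) (ordered by reverse inclusion) and the lattice O(O(X)) of Scott-open subsets of the frame O(X). -/

import Mathlib

open Set Topology

/-- The lower powerspace: closed subsets of `X`. -/
def LowerPS (X : Type*) [TopologicalSpace X] : Type _ := {A : Set X // IsClosed A}

/-- Lower Vietoris topology, generated by the sets `◇U = {A | A ∩ U ≠ ∅}` for `U` open. -/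
instance (X : Type*) [TopologicalSpace X] : TopologicalSpace (LowerPS X) :=
  .generateFrom {S | ∃ U : Set X, IsOpen U ∧ S = {A : LowerPS X | (A.1 ∩ U).Nonempty}}

/-- The upper powerspace: compact saturated subsets of `X`
(saturated = intersection of all open neighborhoods). -/
def UpperPS (X : Type*) [TopologicalSpace X] : Type _ :=
  {K : Set X // IsCompact K ∧ K = ⋂₀ {U : Set X | IsOpen U ∧ K ⊆ U}}

/-- Upper Vietoris topology, generated by the sets `□U = {K | K ⊆ U}` for `U` open. -/
instance (X : Type*) [TopologicalSpace X] : TopologicalSpace (UpperPS X) :=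
  .generateFrom {S | ∃ U : Set X, IsOpen U ∧ S = {K : UpperPS X | K.1 ⊆ U}}

/-- A `Π⁰₂` subset. -/
def IsPi02 {Y : Type*} [TopologicalSpace Y] (S : Set Y) : Prop :=
  ∃ U V : ℕ → Set Y, (∀ i, IsOpen (U i)) ∧ (∀ i, IsOpen (V i)) ∧
    ∀ y, y ∈ S ↔ ∀ i, y ∈ U i → y ∈ V i

/-- The Scott topology on `P(ω)`, generated by the sets `{x | F ⊆ x}` for finite `F`. -/
instance : TopologicalSpace (Set ℕ) :=
  .generateFrom {S | ∃ F : Finset ℕ, S = {x : Set ℕ | ↑F ⊆ x}}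

/-- A space is quasi-Polish iff it is homeomorphic to a `Π⁰₂` subspace of `P(ω)`
with the Scott topology. -/
def QuasiPolish (X : Type*) [TopologicalSpace X] : Prop :=
  ∃ S : Set (Set ℕ), IsPi02 S ∧ Nonempty (X ≃ₜ S)

/-- Scott-open subsets of a preorder. -/
def IsScottOpen {α : Type*} [Preorder α] (U : Set α) : Prop :=
  (∀ ⦃a b : α⦄, a ≤ b → a ∈ U → b ∈ U) ∧
  ∀ d : Set α, d.Nonempty → DirectedOn (· ≤ ·) d → ∀ a : α, IsLUB d a → a ∈ U →
    (d ∩ U).Nonempty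

/-- The Scott topology on a preorder. -/
def scottTop (α : Type*) [Preorder α] : TopologicalSpace α := .generateFrom {U | IsScottOpen U}

/-- The frame of open subsets of `X`, ordered by inclusion. -/
def OpensT (X : Type*) [TopologicalSpace X] : Type _ := {U : Set X // IsOpen U}

instance (X : Type*) [TopologicalSpace X] : PartialOrder (OpensT X) :=
  inferInstanceAs (PartialOrder {U : Set X // IsOpen U})

/-- `O(X)` carries the Scott topology. -/
instance (X : Type*) [TopologicalSpace X] : TopologicalSpace (OpensT X) := scottTop (OpensT X)

/-- `□◇U` in `K(A(X))`. -/
def boxDia {X : Type*} [TopologicalSpace X] (U : Set X) : Set (UpperPS (LowerPS X)) :=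
  {𝒦 | ∀ A ∈ 𝒦.1, ((A : LowerPS X).1 ∩ U).Nonempty}

/-- `◇□U` in `A(K(X))`. -/
def diaBox {X : Type*} [TopologicalSpace X] (U : Set X) : Set (LowerPS (UpperPS X)) :=
  {𝒜 | ∃ K ∈ 𝒜.1, (K : UpperPS X).1 ⊆ U}

/-- A space is consonant iff every Scott-open family of opens containing `U` contains
a compact-saturated filter neighborhood `▽K` of `U`. -/
def Consonant (X : Type*) [TopologicalSpace X] : Prop :=
  ∀ H : Set (OpensT X), IsScottOpen H → ∀ U ∈ H,
    ∃ K : UpperPS X, K.1 ⊆ U.1 ∧ ∀ V : OpensT X, K.1 ⊆ V.1 → V ∈ H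

/-- A space is co-consonant. -/
def CoConsonant (Y : Type*) [TopologicalSpace Y] : Prop :=
  ∀ H : Set (OpensT Y), IsScottOpen H → ∀ U ∈ H,
    ∃ F : Finset (Set Y), (∀ A ∈ F, IsClosed A) ∧ (∀ A ∈ F, (U.1 ∩ A).Nonempty) ∧
      ∀ V : OpensT Y, (∀ A ∈ F, (V.1 ∩ A).Nonempty) → V ∈ H


section Aux

variable {X : Type*} [TopologicalSpace X]

/-- `φ` on underlying sets. -/
def phiSet (𝒦 : UpperPS (LowerPS X)) : Set (OpensT X) :=
  {U : OpensT X | ∀ A ∈ 𝒦.1, ((A : LowerPS X).1 ∩ U.1).Nonempty}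

/-- `ψ` on underlying sets. -/
def psiSet (H : Set (OpensT X)) : Set (LowerPS X) :=
  {A : LowerPS X | ∀ U ∈ H, (A.1 ∩ (U : OpensT X).1).Nonempty}

lemma diamond_isOpen {U : Set X} (hU : IsOpen U) :
    IsOpen {A : LowerPS X | (A.1 ∩ U).Nonempty} :=
  TopologicalSpace.GenerateOpen.basic _ ⟨U, hU, rfl⟩

/-- Opens of the lower powerspace are upward closed for inclusion. -/
lemma lowerPS_open_mono {W : Set (LowerPS X)} (hW : IsOpen W) :
    ∀ ⦃A B : LowerPS X⦄, A.1 ⊆ B.1 → A ∈ W → B ∈ W := by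
  have hW' : TopologicalSpace.GenerateOpen
      {S | ∃ U : Set X, IsOpen U ∧ S = {A : LowerPS X | (A.1 ∩ U).Nonempty}} W := hW
  clear hW
  induction hW' with
  | basic S hS =>
      rintro A B hAB hA
      obtain ⟨U, -, rfl⟩ := hS
      obtain ⟨x, hx1, hx2⟩ := hA
      exact ⟨x, hAB hx1, hx2⟩
  | univ => intro A B _ _; trivial
  | inter S T _ _ ihS ihT =>
      rintro A B hAB ⟨hA1, hA2⟩
      exact ⟨ihS hAB hA1, ihT hAB hA2⟩
  | sUnion 𝒮 _ ih =>
      rintro A B hAB ⟨S, hS, hA⟩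
      exact ⟨S, hS, ih S hS hAB hA⟩

/-- The least upper bound of a set of opens is the union. -/
lemma opensT_isLUB (S : Set (OpensT X)) :
    IsLUB S ⟨⋃ U ∈ S, (U : OpensT X).1, isOpen_biUnion fun U _ => U.2⟩ := by
  constructor
  · intro U hU
    exact Set.subset_biUnion_of_mem (u := fun U : OpensT X => U.1) hU
  · intro b hb
    show (⋃ U ∈ S, (U : OpensT X).1) ⊆ b.1
    exact Set.iUnion₂_subset fun U hU => hb hU

lemma opensT_lub_eq {S : Set (OpensT X)} {a : OpensT X} (h : IsLUB S a) :
    a.1 = ⋃ U ∈ S, (U : OpensT X).1 :=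
  congrArg Subtype.val (h.unique (opensT_isLUB S))

lemma phiSet_scottOpen (𝒦 : UpperPS (LowerPS X)) : IsScottOpen (phiSet 𝒦) := by
  constructor
  · intro a b hab ha A hA
    obtain ⟨x, hx1, hx2⟩ := ha A hA
    exact ⟨x, hx1, hab hx2⟩
  · intro d hd hdir a hlub ha
    have hcover : 𝒦.1 ⊆ ⋃ U ∈ d, {A : LowerPS X | (A.1 ∩ (U : OpensT X).1).Nonempty} := by
      intro A hA
      obtain ⟨x, hx1, hx2⟩ := ha A hA
      rw [opensT_lub_eq hlub] at hx2
      obtain ⟨U, hU, hxU⟩ := Set.mem_iUnion₂.1 hx2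
      exact Set.mem_iUnion₂.2 ⟨U, hU, ⟨x, hx1, hxU⟩⟩
    haveI : Nonempty d := hd.coe_sort
    have hcover' : 𝒦.1 ⊆ ⋃ U : d, {A : LowerPS X | (A.1 ∩ (U : OpensT X).1).Nonempty} := by
      rwa [Set.biUnion_eq_iUnion] at hcover
    obtain ⟨t, ht⟩ := 𝒦.2.1.elim_finite_subcover
      (fun U : d => {A : LowerPS X | (A.1 ∩ (U : OpensT X).1).Nonempty})
      (fun U => diamond_isOpen (U : OpensT X).2) hcover'
    obtain ⟨z, hz⟩ := (hdir.directed_val).finset_le t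
    refine ⟨z.1, z.2, ?_⟩
    intro A hA
    obtain ⟨U, hU, hAU⟩ := Set.mem_iUnion₂.1 (ht hA)
    obtain ⟨x, hx1, hx2⟩ := hAU
    exact ⟨x, hx1, hz U hU hx2⟩

lemma psiSet_saturated (H : Set (OpensT X)) :
    psiSet H = ⋂₀ {W : Set (LowerPS X) | IsOpen W ∧ psiSet H ⊆ W} := by
  apply Set.Subset.antisymm
  · intro A hA W hW
    exact hW.2 hA
  · intro A hA U hU
    exact hA {B : LowerPS X | (B.1 ∩ U.1).Nonempty}
      ⟨diamond_isOpen U.2, fun B hB => hB U hU⟩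

lemma psiSet_compact {H : Set (OpensT X)} (hH : IsScottOpen H) :
    IsCompact (psiSet H) := by
  rw [isCompact_iff_ultrafilter_le_nhds']
  intro f hf
  set A₀ : Set X := {x : X | ∀ U : Set X, IsOpen U → x ∈ U →
    {B : LowerPS X | (B.1 ∩ U).Nonempty} ∈ f} with hA₀def
  have hA₀closed : IsClosed A₀ := by
    rw [← isOpen_compl_iff, isOpen_iff_forall_mem_open]
    intro x hx
    simp only [hA₀def, Set.mem_compl_iff, Set.mem_setOf_eq, not_forall] at hx
    obtain ⟨U, hU, hxU, hUf⟩ := hx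
    refine ⟨U, fun y hy hymem => hUf (hymem U hU hy), hU, hxU⟩
  refine ⟨⟨A₀, hA₀closed⟩, ?_, ?_⟩
  · -- A₀ ∈ psiSet H
    intro U hU
    by_contra hne
    -- every point of U has an open nbhd V with ◇V ∉ f
    set 𝒰 : Set (OpensT X) := {V : OpensT X | {B : LowerPS X | (B.1 ∩ V.1).Nonempty} ∉ f}
      with h𝒰def
    have h𝒰ne : 𝒰.Nonempty := by
      refine ⟨⟨∅, isOpen_empty⟩, ?_⟩
      have : {B : LowerPS X | (B.1 ∩ (∅ : Set X)).Nonempty} = ∅ := by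
        ext B; simp
      simp only [h𝒰def, Set.mem_setOf_eq, this]
      show {B : LowerPS X | (B.1 ∩ (∅ : Set X)).Nonempty} ∉ f
      rw [this]
      exact f.empty_notMem
    have h𝒰dir : DirectedOn (· ≤ ·) 𝒰 := by
      rintro V hV V' hV'
      refine ⟨⟨V.1 ∪ V'.1, V.2.union V'.2⟩, ?_, Set.subset_union_left,
        Set.subset_union_right⟩
      have heq : {B : LowerPS X | (B.1 ∩ (V.1 ∪ V'.1)).Nonempty}
          = {B : LowerPS X | (B.1 ∩ V.1).Nonempty} ∪ {B : LowerPS X | (B.1 ∩ V'.1).Nonempty} := by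
        ext B
        simp [Set.inter_union_distrib_left, Set.union_nonempty]
      simp only [h𝒰def, Set.mem_setOf_eq, heq, Ultrafilter.union_mem_iff]
      show {B : LowerPS X | (B.1 ∩ (V.1 ∪ V'.1)).Nonempty} ∉ f
      rw [heq, Ultrafilter.union_mem_iff]
      exact fun h => h.elim hV hV'
    have hUsub : U.1 ⊆ ⋃ V ∈ 𝒰, (V : OpensT X).1 := by
      intro x hxU
      have hxA₀ : x ∉ A₀ := fun hxA₀ => hne ⟨x, hxA₀, hxU⟩
      simp only [hA₀def, Set.mem_setOf_eq, not_forall] at hxA₀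
      obtain ⟨V, hV, hxV, hVf⟩ := hxA₀
      exact Set.mem_iUnion₂.2 ⟨⟨V, hV⟩, hVf, hxV⟩
    have hVstar : (⟨⋃ V ∈ 𝒰, (V : OpensT X).1, isOpen_biUnion fun V _ => V.2⟩ : OpensT X) ∈ H :=
      hH.1 hUsub hU
    obtain ⟨V, hV𝒰, hVH⟩ := hH.2 𝒰 h𝒰ne h𝒰dir _ (opensT_isLUB 𝒰) hVstar
    exact hV𝒰 (Filter.mem_of_superset hf fun B hB => hB V hVH)
  · -- f converges to A₀
    show ↑f ≤ @nhds (LowerPS X)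
      (TopologicalSpace.generateFrom
        {S | ∃ U : Set X, IsOpen U ∧ S = {A : LowerPS X | (A.1 ∩ U).Nonempty}})
      ⟨A₀, hA₀closed⟩
    refine le_of_le_of_eq ?_ (TopologicalSpace.nhds_generateFrom).symm
    refine le_iInf fun S => le_iInf fun hS => ?_
    obtain ⟨hmem, U, hU, rfl⟩ := hS
    rw [Filter.le_principal_iff]
    obtain ⟨x, hx1, hx2⟩ := hmem
    exact hx1 U hU hx2

/-- `φ` as a map into Scott-open sets. -/
def phiK (𝒦 : UpperPS (LowerPS X)) : {H : Set (OpensT X) // IsScottOpen H} :=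
  ⟨phiSet 𝒦, phiSet_scottOpen 𝒦⟩

/-- `ψ` as a map into compact saturated sets. -/
def psiH (H : {H : Set (OpensT X) // IsScottOpen H}) : UpperPS (LowerPS X) :=
  ⟨psiSet H.1, psiSet_compact H.2, psiSet_saturated H.1⟩

lemma psiSet_phiSet (𝒦 : UpperPS (LowerPS X)) : psiSet (phiSet 𝒦) = 𝒦.1 := by
  apply Set.Subset.antisymm
  · intro A hA
    -- the complement of A is not in φ𝒦, so some B ∈ 𝒦 is contained in A
    have hcompl : (⟨A.1ᶜ, A.2.isOpen_compl⟩ : OpensT X) ∉ phiSet 𝒦 := by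
      intro h
      obtain ⟨x, hx1, hx2⟩ := hA _ h
      exact hx2 hx1
    have hex : ∃ B ∈ 𝒦.1, (B : LowerPS X).1 ⊆ A.1 := by
      by_contra hno
      push_neg at hno
      apply hcompl
      intro B hB
      obtain ⟨x, hx, hxA⟩ := Set.not_subset.1 (hno B hB)
      exact ⟨x, hx, hxA⟩
    obtain ⟨B, hB, hBsub⟩ := hex
    -- A is in every open superset of 𝒦, and 𝒦 is saturated
    have : A ∈ ⋂₀ {W : Set (LowerPS X) | IsOpen W ∧ 𝒦.1 ⊆ W} := by
      intro W hW
      exact lowerPS_open_mono hW.1 hBsub (hW.2 hB)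
    have hsat := 𝒦.2.2
    rw [show ⋂₀ {U : Set (LowerPS X) | IsOpen U ∧ 𝒦.1 ⊆ U}
        = ⋂₀ {W : Set (LowerPS X) | IsOpen W ∧ 𝒦.1 ⊆ W} from rfl] at hsat
    rw [hsat]
    exact this
  · intro A hA U hU
    exact hU A hA

lemma phiSet_psiSet {H : Set (OpensT X)} (hH : IsScottOpen H) :
    phiSet (psiH ⟨H, hH⟩) = H := by
  apply Set.Subset.antisymm
  · intro U hU
    by_contra hUH
    -- the closed set Uᶜ meets every member of H
    have hAc : (⟨U.1ᶜ, U.2.isClosed_compl⟩ : LowerPS X) ∈ psiSet H := by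
      intro V hV
      rcases Set.eq_empty_or_nonempty (V.1 ∩ U.1ᶜ) with hemp | hne
      · have hVU : V ≤ U := by
          intro x hx
          by_contra hxU
          exact absurd (Set.eq_empty_iff_forall_notMem.1 hemp x ⟨hx, hxU⟩) (fun h => h)
        exact absurd (hH.1 hVU hV) hUH
      · exact hne.imp fun x hx => ⟨hx.2, hx.1⟩
    obtain ⟨x, hx1, hx2⟩ := hU _ hAc
    exact hx1 hx2
  · intro U hU A hA
    exact hA U hU

end Aux

/-- `φ(𝒦) = {U open | every A ∈ 𝒦 meets U}` and `ψ(ℋ) = ⋂_{U ∈ ℋ} ◇U` are mutually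
inverse order isomorphisms between `K(A(X))` ordered by reverse inclusion and the lattice
of Scott-open subsets of `O(X)`. -/
theorem phi_psi_order_iso (X : Type*) [TopologicalSpace X] :
    ∃ (φ : UpperPS (LowerPS X) → {H : Set (OpensT X) // IsScottOpen H})
      (ψ : {H : Set (OpensT X) // IsScottOpen H} → UpperPS (LowerPS X)),
      (∀ 𝒦, (φ 𝒦).1 =
          {U : OpensT X | ∀ A ∈ 𝒦.1, ((A : LowerPS X).1 ∩ U.1).Nonempty}) ∧
      (∀ ℋ, (ψ ℋ).1 =
          {A : LowerPS X | ∀ U ∈ ℋ.1, (A.1 ∩ (U : OpensT X).1).Nonempty}) ∧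
      (∀ 𝒦, ψ (φ 𝒦) = 𝒦) ∧ (∀ ℋ, φ (ψ ℋ) = ℋ) ∧
      (∀ 𝒦 𝒦', 𝒦'.1 ⊆ 𝒦.1 ↔ (φ 𝒦).1 ⊆ (φ 𝒦').1) := by
  refine ⟨phiK, psiH, fun _ => rfl, fun _ => rfl, ?_, ?_, ?_⟩
  · intro 𝒦
    exact Subtype.ext (psiSet_phiSet 𝒦)
  · intro ℋ
    obtain ⟨H, hH⟩ := ℋ
    exact Subtype.ext (phiSet_psiSet hH)
  · intro 𝒦 𝒦'
    constructor
    · intro h U hU A hA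
      exact hU A (h hA)
    · intro h A hA
      rw [← psiSet_phiSet 𝒦'] at hA
      rw [← psiSet_phiSet 𝒦]
      exact fun U hU => hA U (h hU)
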